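/- arXiv:1511.07534 — 2 statements merged into one kernel-verified Lean document; each statement's English description precedes it below -/
import Mathlib

section
/- Let F(z) = Σ_{n≥0} f(n) z^n with f : ℕ → ℝ nonnegative, and suppose the partial sums satisfy Σ_{n≤N} f(n) ≍ N^β (log N)^m as N → ∞ for some β ≥ 0 and integer m ≥ 0 (i.e., bounded above and below by positive constant multiples). Then for every ε > 0, as z → 1⁻ along (0,1): (1−z)^{−(β−ε)} ≤ F(z) ≤ (1−z)^{−(β+ε)} eventually. -/
open Filter Real

set_option maxHeartbeats 1000000

-- auxB : x^γ ≤ C exp(x/2)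
lemma auxB (γ : ℝ) (hγ : 0 ≤ γ) : ∃ C : ℝ, 1 ≤ C ∧ ∀ x : ℝ, 0 ≤ x → x ^ γ ≤ C * Real.exp (x/2) := by
  set K := ⌈γ⌉₊ with hK
  refine ⟨(2:ℝ) ^ K * ((Nat.factorial K : ℕ) : ℝ), ?_, ?_⟩
  · have h1 : (1:ℝ) ≤ 2 ^ K := one_le_pow₀ (by norm_num)
    have h2 : (1:ℝ) ≤ ((Nat.factorial K : ℕ) : ℝ) := by exact_mod_cast Nat.one_le_iff_ne_zero.2 (Nat.factorial_ne_zero K)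
    nlinarith
  · intro x hx
    have hexp : (1:ℝ) ≤ Real.exp (x/2) := Real.one_le_exp (by linarith)
    rcases le_or_gt x 1 with h1 | h1
    · have : x ^ γ ≤ 1 := Real.rpow_le_one hx h1 hγ
      have h2 : (1:ℝ) ≤ (2:ℝ) ^ K * ((Nat.factorial K : ℕ) : ℝ) := by
        have h1' : (1:ℝ) ≤ 2 ^ K := one_le_pow₀ (by norm_num)
        have h2' : (1:ℝ) ≤ ((Nat.factorial K : ℕ) : ℝ) := by exact_mod_cast Nat.one_le_iff_ne_zero.2 (Nat.factorial_ne_zero K)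
        nlinarith
      nlinarith
    · have hx1 : (1:ℝ) ≤ x := h1.le
      have e1 : x ^ γ ≤ x ^ (K:ℝ) := Real.rpow_le_rpow_of_exponent_le hx1 (Nat.le_ceil γ)
      rw [Real.rpow_natCast] at e1
      have e2 : x ^ K = 2 ^ K * (x/2) ^ K := by
        rw [← mul_pow]; ring_nf
      have e3 : (x/2) ^ K ≤ ((Nat.factorial K : ℕ) : ℝ) * Real.exp (x/2) := by
        have h := Real.sum_le_exp_of_nonneg (x := x/2) (by linarith) (K+1)
        have h2 : (x/2)^K / ((Nat.factorial K : ℕ) : ℝ) ≤ ∑ i ∈ Finset.range (K+1), (x/2) ^ i / (Nat.factorial i : ℝ) :=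
          Finset.single_le_sum (f := fun i => (x/2)^i / (Nat.factorial i : ℝ))
            (fun i _ => by positivity) (Finset.self_mem_range_succ K)
        have hKfac : (0:ℝ) < ((Nat.factorial K : ℕ) : ℝ) := by exact_mod_cast Nat.factorial_pos K
        have h3 : (x/2)^K / ((Nat.factorial K : ℕ) : ℝ) ≤ Real.exp (x/2) := le_trans h2 h
        rw [div_le_iff₀ hKfac] at h3
        nlinarith
      calc x ^ γ ≤ x ^ K := e1
        _ = 2 ^ K * (x/2)^K := e2
        _ ≤ (2:ℝ) ^ K * (((Nat.factorial K):ℝ) * Real.exp (x/2)) := by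
            have : (0:ℝ) < 2 ^ K := by positivity
            nlinarith
        _ = (2:ℝ) ^ K * ((Nat.factorial K):ℝ) * Real.exp (x/2) := by ring

lemma auxA (γ : ℝ) (hγ : 0 < γ) : ∃ C : ℝ, 0 < C ∧ ∀ z : ℝ, z ∈ Set.Ioo (0:ℝ) 1 →
    Summable (fun n : ℕ => (n:ℝ) ^ γ * z ^ n) ∧
    ∑' n : ℕ, (n:ℝ) ^ γ * z ^ n ≤ C * (1-z) ^ (-(γ+1)) := by
  obtain ⟨C₀, hC₀, hB⟩ := auxB γ hγ.le
  refine ⟨4 * C₀, by linarith, ?_⟩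
  intro z hz
  obtain ⟨hz0, hz1⟩ := hz
  set t : ℝ := 1 - z with htdef
  have ht0 : 0 < t := by simp only [htdef]; linarith
  have ht1 : t < 1 := by simp only [htdef]; linarith
  set r : ℝ := Real.exp (-(t/2)) with hrdef
  have hr0 : 0 < r := Real.exp_pos _
  have hr1 : r < 1 := Real.exp_lt_one_iff.2 (by linarith)
  -- termwise bound
  have key : ∀ n : ℕ, (n:ℝ) ^ γ * z ^ n ≤ (C₀ * t ^ (-γ)) * r ^ n := by
    intro n
    rcases Nat.eq_zero_or_pos n with h | h
    · subst h
      simp only [Nat.cast_zero, Real.zero_rpow hγ.ne', pow_zero, zero_mul, mul_one]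
      positivity
    · have hn1 : (1:ℝ) ≤ (n:ℝ) := by exact_mod_cast h
      have e1 : (n:ℝ) ^ γ = ((n:ℝ) * t) ^ γ * t ^ (-γ) := by
        rw [Real.mul_rpow (by positivity) ht0.le, Real.rpow_neg ht0.le, mul_assoc,
          mul_inv_cancel₀ (by positivity), mul_one]
      have e2 : ((n:ℝ) * t) ^ γ ≤ C₀ * Real.exp ((n:ℝ) * t / 2) := hB _ (by positivity)
      have e3 : z ^ n ≤ Real.exp (-t) ^ n := by
        apply pow_le_pow_left₀ hz0.le
        have := Real.add_one_le_exp (-t)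
        linarith
      have e4 : Real.exp ((n:ℝ) * t / 2) * Real.exp (-t) ^ n = r ^ n := by
        rw [← Real.exp_nat_mul, ← Real.exp_nat_mul, ← Real.exp_add]
        congr 1; ring
      calc (n:ℝ) ^ γ * z ^ n = ((n:ℝ) * t) ^ γ * t ^ (-γ) * z ^ n := by rw [← e1]
        _ ≤ (C₀ * Real.exp ((n:ℝ) * t / 2)) * t ^ (-γ) * Real.exp (-t) ^ n := by
            have h1 : (0:ℝ) ≤ t ^ (-γ) := Real.rpow_nonneg ht0.le _
            have h2 : (0:ℝ) ≤ z ^ n := by positivity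
            have h3 : z ^ n ≤ Real.exp (-t) ^ n := e3
            have h4 : (0:ℝ) ≤ ((n:ℝ) * t) ^ γ := Real.rpow_nonneg (by positivity) _
            exact mul_le_mul (mul_le_mul_of_nonneg_right e2 h1) e3 h2 (by positivity)
        _ = (C₀ * t ^ (-γ)) * (Real.exp ((n:ℝ) * t / 2) * Real.exp (-t) ^ n) := by ring
        _ = (C₀ * t ^ (-γ)) * r ^ n := by rw [e4]
  have hsumgeo : Summable (fun n : ℕ => (C₀ * t ^ (-γ)) * r ^ n) :=
    (summable_geometric_of_lt_one hr0.le hr1).mul_left _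
  have hnonneg : ∀ n : ℕ, 0 ≤ (n:ℝ) ^ γ * z ^ n := fun n => by positivity
  have hs : Summable (fun n : ℕ => (n:ℝ) ^ γ * z ^ n) :=
    Summable.of_nonneg_of_le hnonneg key hsumgeo
  refine ⟨hs, ?_⟩
  have h1 : ∑' n : ℕ, (n:ℝ) ^ γ * z ^ n ≤ ∑' n : ℕ, (C₀ * t ^ (-γ)) * r ^ n :=
    Summable.tsum_le_tsum key hs hsumgeo
  have h2 : ∑' n : ℕ, (C₀ * t ^ (-γ)) * r ^ n = (C₀ * t ^ (-γ)) * (1 - r)⁻¹ := by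
    rw [tsum_mul_left, tsum_geometric_of_lt_one hr0.le hr1]
  -- 1 - r ≥ t/4
  have h3 : t / 4 ≤ 1 - r := by
    have hu : Real.exp (-(t/2)) ≤ 1 / (1 + t/2) := by
      rw [le_div_iff₀ (by linarith)]
      have := Real.add_one_le_exp (t/2)
      have hepos := Real.exp_pos (-(t/2))
      have hme : Real.exp (-(t/2)) * Real.exp (t/2) = 1 := by
        rw [← Real.exp_add]; simp
      nlinarith
    have : 1 - 1/(1 + t/2) = (t/2)/(1 + t/2) := by field_simp; ring
    have h4 : (t/2)/(1 + t/2) ≥ t/4 := by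
      rw [ge_iff_le, div_le_div_iff₀ (by norm_num) (by linarith)]
      nlinarith
    simp only [hrdef]
    linarith [hu, h4, this]
  have h5 : (1 - r)⁻¹ ≤ 4 / t := by
    rw [inv_le_iff_one_le_mul₀ (by linarith)]
    have hm := mul_le_mul_of_nonneg_left h3 (show (0:ℝ) ≤ 4/t by positivity)
    have he : 4/t * (t/4) = 1 := by field_simp
    linarith
  have h6 : (C₀ * t ^ (-γ)) * (1 - r)⁻¹ ≤ (C₀ * t ^ (-γ)) * (4/t) := by
    apply mul_le_mul_of_nonneg_left h5
    positivity
  have h7 : (C₀ * t ^ (-γ)) * (4/t) = 4 * C₀ * t ^ (-(γ+1)) := by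
    rw [show -(γ+1) = -γ + (-1) by ring, Real.rpow_add ht0, Real.rpow_neg_one]
    field_simp
  calc ∑' n : ℕ, (n:ℝ) ^ γ * z ^ n ≤ (C₀ * t ^ (-γ)) * (1-r)⁻¹ := by rw [← h2]; exact h1
    _ ≤ (C₀ * t ^ (-γ)) * (4/t) := h6
    _ = 4 * C₀ * t ^ (-(γ+1)) := h7

set_option maxHeartbeats 1000000 in

lemma auxC (f : ℕ → ℝ) (z : ℝ)
    (hS : Summable (fun n : ℕ => (∑ k ∈ Finset.range (n+1), f k) * z ^ n))
    (hf : Summable (fun n : ℕ => f n * z ^ n)) :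
    ∑' n : ℕ, f n * z ^ n = (1 - z) * ∑' n : ℕ, (∑ k ∈ Finset.range (n+1), f k) * z ^ n := by
  set S : ℕ → ℝ := fun n => ∑ k ∈ Finset.range (n+1), f k with hSdef
  set T : ℝ := ∑' n : ℕ, S n * z ^ n with hT
  have hSz : Summable (fun n : ℕ => S n * z ^ (n+1)) := by
    have : (fun n : ℕ => S n * z ^ (n+1)) = fun n : ℕ => z * (S n * z ^ n) := by
      funext n; ring
    rw [this]; exact hS.mul_left z
  have hSshift : Summable (fun n : ℕ => S (n+1) * z ^ (n+1)) :=
    (summable_nat_add_iff 1).2 hS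
  have hfshift : Summable (fun n : ℕ => f (n+1) * z ^ (n+1)) :=
    (summable_nat_add_iff 1).2 hf
  have h1 : ∑' n : ℕ, S n * z ^ (n+1) = z * T := by
    rw [hT, ← tsum_mul_left]
    congr 1; funext n; ring
  have h2 : T = S 0 + ∑' n : ℕ, S (n+1) * z ^ (n+1) := by
    rw [hT, Summable.tsum_eq_zero_add hS]
    simp [hSdef]
  have h3 : ∑' n : ℕ, f n * z ^ n = f 0 + ∑' n : ℕ, f (n+1) * z ^ (n+1) := by
    have := Summable.tsum_eq_zero_add hf
    simpa using this
  have h4 : ∑' n : ℕ, S (n+1) * z ^ (n+1)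
      = ∑' n : ℕ, S n * z ^ (n+1) + ∑' n : ℕ, f (n+1) * z ^ (n+1) := by
    rw [← Summable.tsum_add hSz hfshift]
    congr 1; funext n
    have : S (n+1) = S n + f (n+1) := by
      simp [hSdef, Finset.sum_range_succ]
    rw [this]; ring
  have h5 : S 0 = f 0 := by simp [hSdef]
  have hkey : T = f 0 + z * T + ∑' n : ℕ, f (n+1) * z ^ (n+1) := by
    linarith [h2, h4, h1, h5]
  have hr : (1 - z) * T = T - z * T := by ring
  rw [h3, hr]
  linarith

lemma auxD (m : ℕ) (δ : ℝ) (hδ : 0 < δ) :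
    ∀ᶠ n : ℕ in atTop, (Real.log n) ^ m ≤ (n:ℝ) ^ δ := by
  rcases Nat.eq_zero_or_pos m with hm | hm
  · subst hm
    filter_upwards [eventually_ge_atTop 1] with n hn
    simpa using Real.one_le_rpow (by exact_mod_cast hn) hδ.le
  · have hpos : 0 < δ / m := by positivity
    have h := (isLittleO_log_rpow_atTop hpos).bound one_pos
    have h2 : ∀ᶠ x : ℝ in atTop, (Real.log x) ^ m ≤ x ^ δ := by
      filter_upwards [h, eventually_ge_atTop (1:ℝ)] with x hx hx1
      have hlog0 : 0 ≤ Real.log x := Real.log_nonneg hx1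
      have hx0 : (0:ℝ) ≤ x := by linarith
      have hb : Real.log x ≤ x ^ (δ / m) := by
        rw [Real.norm_eq_abs, Real.norm_eq_abs, one_mul] at hx
        calc Real.log x ≤ |Real.log x| := le_abs_self _
          _ ≤ |x ^ (δ/m)| := hx
          _ = x ^ (δ/m) := abs_of_nonneg (Real.rpow_nonneg hx0 _)
      calc (Real.log x) ^ m ≤ (x ^ (δ/m)) ^ m := pow_le_pow_left₀ hlog0 hb m
        _ = x ^ δ := by
            rw [← Real.rpow_natCast (x ^ (δ/m)) m, ← Real.rpow_mul hx0]
            congr 1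
            field_simp
    exact (tendsto_natCast_atTop_atTop (R := ℝ)).eventually h2

/-- if `f ≥ 0` and `∑_{n ≤ N} f n ≍ N^β (log N)^m`, then for every `ε > 0`,
eventually as `z → 1⁻` along `(0,1)`:
`(1-z)^{-(β-ε)} ≤ F(z) ≤ (1-z)^{-(β+ε)}` where `F z = ∑ f n z^n`. -/
theorem stmt_6 (f : ℕ → ℝ) (hf : ∀ n, 0 ≤ f n) (β : ℝ) (hβ : 0 ≤ β) (m : ℕ)
    (hasymp : ∃ c₁ c₂ : ℝ, 0 < c₁ ∧ 0 < c₂ ∧ ∀ᶠ N : ℕ in atTop,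
      c₁ * ((N : ℝ) ^ β * (Real.log N) ^ m) ≤ ∑ n ∈ Finset.range (N + 1), f n ∧
      (∑ n ∈ Finset.range (N + 1), f n) ≤ c₂ * ((N : ℝ) ^ β * (Real.log N) ^ m))
    (F : ℝ → ℝ) (hF : ∀ z ∈ Set.Ioo (0 : ℝ) 1, F z = ∑' n : ℕ, f n * z ^ n) :
    ∀ ε : ℝ, 0 < ε → ∀ᶠ z in nhdsWithin 1 (Set.Ioo (0 : ℝ) 1),
      (1 - z) ^ (-(β - ε)) ≤ F z ∧ F z ≤ (1 - z) ^ (-(β + ε)) := by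
  obtain ⟨c₁, c₂, hc₁, hc₂, hev⟩ := hasymp
  intro ε hε
  have hγpos : 0 < β + ε/2 := by linarith
  set γ : ℝ := β + ε/2 with hγdef
  obtain ⟨C, hCpos, hAx⟩ := auxA γ hγpos
  obtain ⟨N₀, hN₀⟩ := eventually_atTop.1 (hev.and (auxD m (ε/2) (by linarith)))
  set S : ℕ → ℝ := fun n => ∑ k ∈ Finset.range (n+1), f k with hSdef
  have hSnonneg : ∀ n, 0 ≤ S n := fun n => Finset.sum_nonneg (fun i _ => hf i)
  have hSmono : Monotone S := by
    intro a b hab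
    exact Finset.sum_le_sum_of_subset_of_nonneg
      (Finset.range_subset_range.2 (by omega)) (fun i _ _ => hf i)
  set A : ℝ := S N₀ with hAdef
  have hA0 : 0 ≤ A := hSnonneg N₀
  have hSbound : ∀ n : ℕ, S n ≤ A + c₂ * (n:ℝ) ^ γ := by
    intro n
    rcases le_or_gt n N₀ with h | h
    · have h1 : S n ≤ A := hSmono h
      have h2 : 0 ≤ c₂ * (n:ℝ) ^ γ := by positivity
      linarith
    · have hn : N₀ ≤ n := h.le
      obtain ⟨⟨_, hup⟩, hlg⟩ := hN₀ n hn
      have hn1 : (1:ℝ) ≤ (n:ℝ) := by exact_mod_cast Nat.one_le_iff_ne_zero.2 (by omega)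
      have h3 : (n:ℝ) ^ β * (Real.log n) ^ m ≤ (n:ℝ) ^ β * (n:ℝ) ^ (ε/2) :=
        mul_le_mul_of_nonneg_left hlg (Real.rpow_nonneg (by linarith) _)
      have h4 : (n:ℝ) ^ β * (n:ℝ) ^ (ε/2) = (n:ℝ) ^ γ := by
        rw [← Real.rpow_add (by linarith : (0:ℝ) < n)]
      have h5 : S n ≤ c₂ * ((n:ℝ) ^ β * (Real.log n) ^ m) := hup
      have h6 : c₂ * ((n:ℝ) ^ β * (Real.log n) ^ m) ≤ c₂ * (n:ℝ) ^ γ := by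
        rw [← h4]; exact mul_le_mul_of_nonneg_left h3 hc₂.le
      linarith
  set K : ℝ := A + c₂ * C with hKdef
  have hKpos : 0 < K := by positivity
  have hc₃pos : 0 < Real.exp (-4) * c₁ := by positivity
  set M : ℕ := max N₀ 3 with hMdef
  -- filter setup
  have htend : Tendsto (fun z : ℝ => 1 - z) (nhdsWithin 1 (Set.Ioo (0:ℝ) 1)) (nhds 0) := by
    have h : Tendsto (fun z : ℝ => 1 - z) (nhds (1:ℝ)) (nhds 0) := by
      have : Continuous (fun z : ℝ => 1 - z) := by continuity
      simpa using this.tendsto (1:ℝ)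
    exact h.mono_left nhdsWithin_le_nhds
  have hrp : ∀ δ : ℝ, 0 < δ →
      Tendsto (fun z : ℝ => (1-z) ^ δ) (nhdsWithin 1 (Set.Ioo (0:ℝ) 1)) (nhds 0) := by
    intro δ hδ
    have hc : ContinuousAt (fun t : ℝ => t ^ δ) 0 :=
      Real.continuousAt_rpow_const 0 δ (Or.inr hδ.le)
    have := hc.tendsto.comp htend
    simpa [Function.comp_def, Real.zero_rpow hδ.ne'] using this
  have e1 : ∀ᶠ z in nhdsWithin 1 (Set.Ioo (0:ℝ) 1), K * (1-z) ^ (ε/2) < 1 := by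
    have h := (hrp (ε/2) (by linarith)).const_mul K
    rw [mul_zero] at h
    exact h.eventually_lt_const one_pos
  have e2 : ∀ᶠ z in nhdsWithin 1 (Set.Ioo (0:ℝ) 1), (1-z) ^ ε < Real.exp (-4) * c₁ :=
    (hrp ε hε).eventually_lt_const hc₃pos
  have e3 : ∀ᶠ z in nhdsWithin 1 (Set.Ioo (0:ℝ) 1), 1 - z < 1/(M+2 : ℝ) :=
    htend.eventually_lt_const (by positivity)
  have e4 : ∀ᶠ z in nhdsWithin 1 (Set.Ioo (0:ℝ) 1), z ∈ Set.Ioo (0:ℝ) 1 :=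
    eventually_mem_nhdsWithin
  filter_upwards [e1, e2, e3, e4] with z h1 h2 h3 hz
  obtain ⟨hz0, hz1⟩ := hz
  set t : ℝ := 1 - z with htdef
  have ht0 : 0 < t := by simp only [htdef]; linarith
  have ht1 : t < 1 := by simp only [htdef]; linarith
  have hM2 : (5:ℝ) ≤ (M:ℝ) + 2 := by
    have : (3:ℕ) ≤ M := le_max_right _ _
    have : (3:ℝ) ≤ (M:ℝ) := by exact_mod_cast this
    linarith
  have ht5 : t < 1/5 := lt_of_lt_of_le h3 (by
    apply one_div_le_one_div_of_le; norm_num; exact hM2)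
  have hzhalf : (1:ℝ)/2 < z := by simp only [htdef] at ht5 ⊢; linarith
  -- summability
  obtain ⟨hsγ, htsγ⟩ := hAx z ⟨hz0, hz1⟩
  have hgeo : Summable (fun n : ℕ => A * z ^ n) :=
    (summable_geometric_of_lt_one hz0.le hz1).mul_left A
  have hsum2 : Summable (fun n : ℕ => A * z ^ n + c₂ * ((n:ℝ) ^ γ * z ^ n)) :=
    hgeo.add (hsγ.mul_left c₂)
  have hterm : ∀ n : ℕ, S n * z ^ n ≤ A * z ^ n + c₂ * ((n:ℝ) ^ γ * z ^ n) := by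
    intro n
    have h := mul_le_mul_of_nonneg_right (hSbound n) (pow_nonneg hz0.le n)
    calc S n * z ^ n ≤ (A + c₂ * (n:ℝ) ^ γ) * z ^ n := h
      _ = A * z ^ n + c₂ * ((n:ℝ) ^ γ * z ^ n) := by ring
  have hSsum : Summable (fun n : ℕ => S n * z ^ n) :=
    Summable.of_nonneg_of_le (fun n => mul_nonneg (hSnonneg n) (pow_nonneg hz0.le n)) hterm hsum2
  have hfsum : Summable (fun n : ℕ => f n * z ^ n) := by
    apply Summable.of_nonneg_of_le (fun n => mul_nonneg (hf n) (pow_nonneg hz0.le n)) _ hSsum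
    intro n
    apply mul_le_mul_of_nonneg_right _ (pow_nonneg hz0.le n)
    exact Finset.single_le_sum (f := f) (fun i _ => hf i) (Finset.self_mem_range_succ n)
  have hFz : F z = ∑' n : ℕ, f n * z ^ n := hF z ⟨hz0, hz1⟩
  have habel : F z = (1 - z) * ∑' n : ℕ, S n * z ^ n := by
    rw [hFz]; exact auxC f z hSsum hfsum
  constructor
  · -- LOWER BOUND
    set N : ℕ := ⌈1/t⌉₊ with hNdef
    have hceil : 1/t ≤ (N:ℝ) := Nat.le_ceil _
    have hMt : (M:ℝ) + 2 < 1/t := by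
      rw [lt_div_iff₀ ht0]
      have h3' : (1 - z) * ((M:ℝ)+2) < 1 := by
        rw [← lt_div_iff₀ (by positivity : (0:ℝ) < (M:ℝ)+2)]; exact h3
      simp only [htdef]
      nlinarith [h3']
    have hNM : (M:ℝ) + 2 ≤ (N:ℝ) := le_trans hMt.le hceil
    have hNge : N₀ ≤ N := by
      have h1' : (N₀:ℝ) ≤ (M:ℝ) := by exact_mod_cast le_max_left N₀ 3
      have : (N₀:ℝ) ≤ (N:ℝ) := by linarith
      exact_mod_cast this
    have hN3 : (3:ℝ) ≤ (N:ℝ) := by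
      have h1' : (3:ℝ) ≤ (M:ℝ) := by exact_mod_cast le_max_right N₀ 3
      linarith
    have hNpos : (0:ℝ) < (N:ℝ) := by linarith
    have hlogN : 1 ≤ Real.log N := by
      rw [Real.le_log_iff_exp_le hNpos]
      have := Real.exp_one_lt_d9
      linarith
    have hlogm : 1 ≤ (Real.log N) ^ m := one_le_pow₀ hlogN
    have hSlowN : c₁ * ((N:ℝ) ^ β * (Real.log N) ^ m) ≤ S N := ((hN₀ N hNge).1).1
    have hNβ : t ^ (-β) ≤ (N:ℝ) ^ β := by
      have h1' : t⁻¹ ≤ (N:ℝ) := by rw [← one_div]; exact hceil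
      have h2' : (t⁻¹ : ℝ) ^ β ≤ (N:ℝ) ^ β :=
        Real.rpow_le_rpow (by positivity) h1' hβ
      calc t ^ (-β) = (t⁻¹) ^ β := by
            rw [Real.rpow_neg ht0.le, ← Real.inv_rpow ht0.le]
        _ ≤ (N:ℝ) ^ β := h2'
    have hSc : c₁ * t ^ (-β) ≤ S N := by
      have hmm : t ^ (-β) * 1 ≤ (N:ℝ) ^ β * (Real.log N) ^ m :=
        mul_le_mul hNβ hlogm (by norm_num) (Real.rpow_nonneg hNpos.le β)
      have h1'' : c₁ * (t ^ (-β) * 1) ≤ c₁ * ((N:ℝ) ^ β * (Real.log N) ^ m) :=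
        mul_le_mul_of_nonneg_left hmm hc₁.le
      rw [mul_one] at h1''
      exact h1''.trans hSlowN
    have hzN : Real.exp (-4) ≤ z ^ N := by
      have hlz := Real.log_le_sub_one_of_pos (show (0:ℝ) < z⁻¹ by positivity)
      rw [Real.log_inv] at hlz
      have hzinv : z⁻¹ ≤ 1 + 2*t := by
        rw [← one_div, div_le_iff₀ hz0]
        simp only [htdef]
        nlinarith [mul_nonneg (show (0:ℝ) ≤ 2*z-1 by linarith) (show (0:ℝ) ≤ 1-z by linarith)]
      have hlogz : -(2*t) ≤ Real.log z := by linarith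
      have hNlt : (N:ℝ) < 1/t + 1 := Nat.ceil_lt_add_one (by positivity)
      have hlogz0 : Real.log z ≤ 0 := Real.log_nonpos hz0.le hz1.le
      have hstep : -(4:ℝ) ≤ (N:ℝ) * Real.log z := by
        have ha := mul_le_mul_of_nonpos_right hNlt.le hlogz0
        have hb := mul_le_mul_of_nonneg_left hlogz (show (0:ℝ) ≤ 1/t + 1 by positivity)
        have hc : (1/t + 1) * (-(2*t)) = -2 - 2*t := by field_simp; ring
        have ht1' : t < 1 := ht1
        nlinarith [ha, hb, hc]
      calc Real.exp (-4) ≤ Real.exp ((N:ℝ) * Real.log z) := Real.exp_le_exp.2 hstep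
        _ = z ^ N := by rw [Real.exp_nat_mul, Real.exp_log hz0]
    have hpartial : S N * z ^ N ≤ ∑ n ∈ Finset.range (N+1), f n * z ^ n := by
      have hterm' : ∀ n ∈ Finset.range (N+1), f n * z ^ N ≤ f n * z ^ n := by
        intro n hn
        have hn' : n ≤ N := Nat.lt_succ_iff.1 (Finset.mem_range.1 hn)
        exact mul_le_mul_of_nonneg_left (pow_le_pow_of_le_one hz0.le hz1.le hn') (hf n)
      calc S N * z ^ N = ∑ n ∈ Finset.range (N+1), f n * z ^ N := by
            rw [← Finset.sum_mul]
        _ ≤ ∑ n ∈ Finset.range (N+1), f n * z ^ n := Finset.sum_le_sum hterm'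
    have htsum : ∑ n ∈ Finset.range (N+1), f n * z ^ n ≤ F z := by
      rw [hFz]
      exact Summable.sum_le_tsum _ (fun i _ => mul_nonneg (hf i) (pow_nonneg hz0.le i)) hfsum
    have hFlow : Real.exp (-4) * (c₁ * t ^ (-β)) ≤ F z := by
      have hmul : Real.exp (-4) * (c₁ * t ^ (-β)) ≤ z ^ N * S N :=
        mul_le_mul hzN hSc (by positivity) (pow_nonneg hz0.le N)
      calc Real.exp (-4) * (c₁ * t ^ (-β)) ≤ z ^ N * S N := hmul
        _ = S N * z ^ N := mul_comm _ _
        _ ≤ ∑ n ∈ Finset.range (N+1), f n * z ^ n := hpartial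
        _ ≤ F z := htsum
    have hfin : t ^ (-(β-ε)) ≤ Real.exp (-4) * (c₁ * t ^ (-β)) := by
      have e : t ^ (-(β-ε)) = t ^ ε * t ^ (-β) := by
        rw [← Real.rpow_add ht0]; congr 1; ring
      rw [e]
      have hmul := mul_le_mul_of_nonneg_right h2.le (Real.rpow_nonneg ht0.le (-β))
      calc t ^ ε * t ^ (-β) ≤ (Real.exp (-4) * c₁) * t ^ (-β) := hmul
        _ = Real.exp (-4) * (c₁ * t ^ (-β)) := by ring
    linarith
  · -- UPPER BOUND
    have hT : ∑' n : ℕ, S n * z ^ n ≤ A * (1-z)⁻¹ + c₂ * (C * t ^ (-(γ+1))) := by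
      have h1' : ∑' n : ℕ, S n * z ^ n ≤ ∑' n : ℕ, (A * z ^ n + c₂ * ((n:ℝ) ^ γ * z ^ n)) :=
        Summable.tsum_le_tsum hterm hSsum hsum2
      have h2' : ∑' n : ℕ, (A * z ^ n + c₂ * ((n:ℝ) ^ γ * z ^ n))
          = A * (1-z)⁻¹ + c₂ * ∑' n : ℕ, (n:ℝ) ^ γ * z ^ n := by
        rw [Summable.tsum_add hgeo (hsγ.mul_left c₂), tsum_mul_left, tsum_mul_left,
          tsum_geometric_of_lt_one hz0.le hz1]
      have h3' : c₂ * ∑' n : ℕ, (n:ℝ) ^ γ * z ^ n ≤ c₂ * (C * t ^ (-(γ+1))) :=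
        mul_le_mul_of_nonneg_left htsγ hc₂.le
      linarith [h1', h3', le_of_eq h2']
    have hFle : F z ≤ A + c₂ * C * t ^ (-γ) := by
      rw [habel]
      have ht' : (1 - z) = t := rfl
      rw [ht']
      have h1' : t * (A * (1-z)⁻¹ + c₂ * (C * t ^ (-(γ+1)))) = A + c₂ * C * t ^ (-γ) := by
        have e : t * t ^ (-(γ+1)) = t ^ (-γ) := by
          rw [show t * t ^ (-(γ+1)) = t ^ (1:ℝ) * t ^ (-(γ+1)) by rw [Real.rpow_one],
            ← Real.rpow_add ht0]
          norm_num
        have e2' : (1 - z)⁻¹ = t⁻¹ := rfl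
        have hinv : t * t⁻¹ = 1 := mul_inv_cancel₀ ht0.ne'
        rw [e2']
        calc t * (A * t⁻¹ + c₂ * (C * t ^ (-(γ+1))))
            = A * (t * t⁻¹) + c₂ * C * (t * t ^ (-(γ+1))) := by ring
          _ = A + c₂ * C * t ^ (-γ) := by rw [hinv, e]; ring
      rw [← h1']
      exact mul_le_mul_of_nonneg_left hT ht0.le
    have h2a : A + c₂ * C * t ^ (-γ) ≤ K * t ^ (-γ) := by
      have hge1 : 1 ≤ t ^ (-γ) :=
        Real.one_le_rpow_of_pos_of_le_one_of_nonpos ht0 ht1.le (by linarith)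
      have : A * 1 ≤ A * t ^ (-γ) := mul_le_mul_of_nonneg_left hge1 hA0
      simp only [hKdef]
      nlinarith
    have h2b : K ≤ t ^ (-(ε/2)) := by
      have hpow : t ^ (ε/2) * t ^ (-(ε/2)) = 1 := by
        rw [← Real.rpow_add ht0]; norm_num
      have hpos : 0 < t ^ (ε/2) := Real.rpow_pos_of_pos ht0 _
      nlinarith [mul_le_mul_of_nonneg_right h1.le (Real.rpow_nonneg ht0.le (-(ε/2)))]
    have h2c : K * t ^ (-γ) ≤ t ^ (-(β+ε)) := by
      have h := mul_le_mul_of_nonneg_right h2b (Real.rpow_nonneg ht0.le (-γ))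
      rwa [← Real.rpow_add ht0, show -(ε/2) + -γ = -(β+ε) by simp only [hγdef]; ring] at h
    linarith
end

section
/- Let k ≥ 2 and let f, g : ℕ → ℤ be k-regular sequences (given by matrix representations). Then the Cauchy convolution h(n) = Σ_{j=0}^{n} f(j) g(n−j) is again k-regular. In particular, taking g ≡ 1 (which is k-regular), the partial-sum sequence n ↦ Σ_{j≤n} f(j) is k-regular. -/
open Matrix

/-- A sequence is `k`-regular if it admits a linear matrix representation over the
base-`k` digits of `n` (least significant digit first). -/
def IsKRegular (k : ℕ) (f : ℕ → ℤ) : Prop :=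
  ∃ d : ℕ, 1 ≤ d ∧ ∃ A : ℕ → Matrix (Fin d) (Fin d) ℤ, ∃ v w : Fin d → ℤ,
    ∀ n : ℕ, f n = w ⬝ᵥ (((Nat.digits k n).map A).prod.mulVec v)

lemma listProd_submatrix {m : Type*} [Fintype m] [DecidableEq m] {d : ℕ}
    (e : m ≃ Fin d) (A : ℕ → Matrix m m ℤ) (l : List ℕ) :
    ((l.map (fun i => (A i).submatrix e.symm e.symm)).prod)
      = ((l.map A).prod).submatrix e.symm e.symm := by
  induction l with
  | nil => simp
  | cons a t ih => simp [ih, Matrix.submatrix_mul_equiv]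

lemma isKRegular_of_rep {k : ℕ} {σ : Type} [Fintype σ] [DecidableEq σ] [Nonempty σ]
    (A : ℕ → Matrix σ σ ℤ) (v w : σ → ℤ) (f : ℕ → ℤ)
    (h : ∀ n, f n = w ⬝ᵥ (((Nat.digits k n).map A).prod.mulVec v)) :
    IsKRegular k f := by
  classical
  obtain ⟨e⟩ : Nonempty (σ ≃ Fin (Fintype.card σ)) := ⟨Fintype.equivFin σ⟩
  refine ⟨Fintype.card σ, Fintype.card_pos, fun i => (A i).submatrix e.symm e.symm,
    v ∘ e.symm, w ∘ e.symm, fun n => ?_⟩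
  rw [h n, listProd_submatrix, Matrix.submatrix_mulVec_equiv]
  have hv : (v ∘ e.symm) ∘ (e.symm).symm = v := by
    funext i; simp
  rw [hv]
  exact (comp_equiv_dotProduct_comp_equiv (e := e.symm)
    (x := w) (y := (((Nat.digits k n).map A).prod *ᵥ v))).symm

def padRep (k L m : ℕ) : List ℕ :=
  Nat.digits k m ++ List.replicate (L - (Nat.digits k m).length) 0

lemma padRep_zero_zero (k : ℕ) : padRep k 0 0 = [] := by simp [padRep]

lemma padRep_succ (k : ℕ) (hk : 2 ≤ k) (L m : ℕ) :
    padRep k (L + 1) m = m % k :: padRep k L (m / k) := by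
  rcases Nat.eq_zero_or_pos m with hm | hm
  · subst hm
    simp [padRep, List.replicate_succ]
  · rw [padRep, padRep, Nat.digits_def' (by omega : 1 < k) hm]
    simp [List.length_cons, Nat.succ_sub_succ]

lemma padRep_lt (k : ℕ) (hk : 2 ≤ k) (L m : ℕ) : ∀ x ∈ padRep k L m, x < k := by
  intro x hx
  rcases List.mem_append.mp hx with h | h
  · exact Nat.digits_lt_base (by omega) h
  · rw [List.eq_of_mem_replicate h]; omega

lemma ofDigits_replicate_zero (k c : ℕ) : Nat.ofDigits k (List.replicate c 0) = 0 := by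
  induction c with
  | zero => simp
  | succ c ih => simp [List.replicate_succ, Nat.ofDigits_cons, ih]

lemma ofDigits_padRep (k : ℕ) (hk : 2 ≤ k) (L m : ℕ) :
    Nat.ofDigits k (padRep k L m) = m := by
  rw [padRep, Nat.ofDigits_append, ofDigits_replicate_zero, Nat.ofDigits_digits]
  simp


lemma exists_padded (k : ℕ) (hk : 2 ≤ k) (f : ℕ → ℤ) (hf : IsKRegular k f) :
    ∃ (σ : Type) (_ : Fintype σ) (_ : DecidableEq σ) (_ : Nonempty σ)
      (B : ℕ → Matrix σ σ ℤ) (V W : σ → ℤ),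
      ∀ l : List ℕ, (∀ x ∈ l, x < k) →
        W ⬝ᵥ ((l.map B).prod.mulVec V) = f (Nat.ofDigits k l) := by
  classical
  obtain ⟨d, hd, A, v, w, hA⟩ := hf
  set B : ℕ → Matrix (Fin d ⊕ Unit) (Fin d ⊕ Unit) ℤ := fun a =>
    Matrix.fromBlocks (A a) (Matrix.replicateCol Unit (if a = 0 then 0 else (A a) *ᵥ v)) 0
      (Matrix.of fun _ _ => if a = 0 then (1 : ℤ) else 0) with hB
  refine ⟨Fin d ⊕ Unit, inferInstance, inferInstance, ⟨Sum.inr ()⟩, B,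
    Sum.elim 0 1, Sum.elim w (fun _ => f 0), ?_⟩
  have hf0 : f 0 = w ⬝ᵥ v := by simpa using hA 0
  have claim : ∀ l : List ℕ, (∀ x ∈ l, x < k) → ∀ (u : Fin d → ℤ) (s : ℤ),
      Sum.elim u (fun _ => s) ⬝ᵥ ((l.map B).prod.mulVec (Sum.elim 0 1)) =
        if Nat.ofDigits k l = 0 then s
        else u ⬝ᵥ (((Nat.digits k (Nat.ofDigits k l)).map A).prod.mulVec v) := by
    intro l
    induction l with
    | nil => intro _ u s; simp
    | cons a t ih =>
      intro hlt u s
      have ha : a < k := hlt a (by simp)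
      have ht : ∀ x ∈ t, x < k := fun x hx => hlt x (by simp [hx])
      have step : Sum.elim u (fun _ => s) ᵥ* B a =
          Sum.elim (u ᵥ* A a) (fun _ => if a = 0 then s else u ⬝ᵥ (A a) *ᵥ v) := by
        funext j
        rw [hB]
        rcases j with p | u'
        · simp [Matrix.vecMul_fromBlocks, Matrix.vecMul, dotProduct]
        · rcases Nat.eq_zero_or_pos a with h0 | h0
          · simp [h0, Matrix.vecMul_fromBlocks, Matrix.vecMul, dotProduct]
          · have hne : a ≠ 0 := by omega
            simp [hne, Matrix.vecMul_fromBlocks, Matrix.vecMul, dotProduct,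
              Matrix.mulVec]
      rw [List.map_cons, List.prod_cons, ← Matrix.mulVec_mulVec,
        Matrix.dotProduct_mulVec, step,
        ih ht (u ᵥ* A a) (if a = 0 then s else u ⬝ᵥ (A a) *ᵥ v)]
      rcases Nat.eq_zero_or_pos (Nat.ofDigits k t) with h0 | h0
      · rcases Nat.eq_zero_or_pos a with ha0 | ha0
        · have : Nat.ofDigits k (a :: t) = 0 := by
            simp [Nat.ofDigits_cons, ha0, h0]
          subst ha0
          simp [this, h0]
        · have hne : a ≠ 0 := by omega
          have hoc : Nat.ofDigits k (a :: t) = a := by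
            simp [Nat.ofDigits_cons, h0]
          have hda : Nat.digits k a = [a] := by
            rw [Nat.digits_def' (by omega : 1 < k) ha0, Nat.mod_eq_of_lt ha,
              Nat.div_eq_of_lt ha]
            simp
          simp [hoc, hne, h0, hda, Matrix.mulVec_mulVec]
      · have hoc : (Nat.ofDigits k (a :: t) : ℕ) = a + k * Nat.ofDigits k t := by
          simp [Nat.ofDigits_cons]
        have h0' : Nat.ofDigits k t ≠ 0 := by omega
        have hpos : Nat.ofDigits k (a :: t) ≠ 0 := by
          intro hcon
          rw [hoc] at hcon
          have := Nat.eq_zero_of_add_eq_zero_left hcon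
          exact h0' (by
            rcases Nat.mul_eq_zero.mp this with h | h
            · omega
            · exact h)
        have hdig : Nat.digits k (Nat.ofDigits k (a :: t)) =
            a :: Nat.digits k (Nat.ofDigits k t) := by
          rw [Nat.digits_def' (by omega : 1 < k) (Nat.pos_of_ne_zero hpos), hoc,
            Nat.add_mul_mod_self_left, Nat.mod_eq_of_lt ha,
            Nat.add_mul_div_left _ _ (by omega : 0 < k), Nat.div_eq_of_lt ha, zero_add]
        rw [if_neg h0', if_neg hpos, hdig, List.map_cons, List.prod_cons,
          ← Matrix.mulVec_mulVec]
        simp [Matrix.dotProduct_mulVec]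
  intro l hl
  rw [claim l hl w (f 0)]
  rcases Nat.eq_zero_or_pos (Nat.ofDigits k l) with h0 | h0
  · rw [h0]; simp [hf0]
  · rw [if_neg (by omega), ← hA]

section Conv

variable {ι κ : Type} [Fintype ι] [DecidableEq ι] [Fintype κ] [DecidableEq κ]

def Cmat (k : ℕ) (Bf : ℕ → Matrix ι ι ℤ) (Bg : ℕ → Matrix κ κ ℤ) (e : ℕ) :
    Matrix ((ι × κ) × Fin 2) ((ι × κ) × Fin 2) ℤ :=
  Matrix.of fun pc qc => ∑ a ∈ Finset.range k, ∑ b ∈ Finset.range k,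
    if a + b + (pc.2 : ℕ) = e + k * (qc.2 : ℕ)
    then Bf a pc.1.1 qc.1.1 * Bg b pc.1.2 qc.1.2 else 0

def Tvec (u : ι → ℤ) (v : κ → ℤ) (c : Fin 2) : (ι × κ) × Fin 2 → ℤ :=
  fun pc => if pc.2 = c then u pc.1.1 * v pc.1.2 else 0

def Fval (k : ℕ) (Bf : ℕ → Matrix ι ι ℤ) (Vf : ι → ℤ) (u : ι → ℤ) (L m : ℕ) : ℤ :=
  u ⬝ᵥ (((padRep k L m).map Bf).prod.mulVec Vf)

lemma Fval_succ (k : ℕ) (hk : 2 ≤ k) (Bf : ℕ → Matrix ι ι ℤ) (Vf : ι → ℤ)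
    (u : ι → ℤ) (L m : ℕ) :
    Fval k Bf Vf u (L + 1) m = Fval k Bf Vf (u ᵥ* Bf (m % k)) L (m / k) := by
  rw [Fval, Fval, padRep_succ k hk, List.map_cons, List.prod_cons,
    ← Matrix.mulVec_mulVec, Matrix.dotProduct_mulVec]

lemma tvec_dot (u : ι → ℤ) (v : κ → ℤ) (c : Fin 2) (X : (ι × κ) × Fin 2 → ℤ) :
    Tvec u v c ⬝ᵥ X = ∑ p : ι × κ, u p.1 * v p.2 * X (p, c) := by
  rw [dotProduct, Fintype.sum_prod_type]
  simp only [Tvec]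
  rw [Finset.sum_comm]
  simp [Finset.sum_ite_eq', Fintype.sum_prod_type]

lemma fin2_cases (c : Fin 2) : c = 0 ∨ c = 1 := by
  have h2 := c.isLt
  have : (c : ℕ) = 0 ∨ (c : ℕ) = 1 := by omega
  rcases this with h | h
  · exact Or.inl (Fin.ext h)
  · exact Or.inr (Fin.ext h)

lemma ite_sum_push {α : Type*} (P : Prop) [Decidable P] (s : Finset α) (f : α → ℤ) :
    (if P then ∑ x ∈ s, f x else 0) = ∑ x ∈ s, if P then f x else 0 := by
  split <;> simp

lemma step_expand (k e : ℕ) (Bf : ℕ → Matrix ι ι ℤ) (Bg : ℕ → Matrix κ κ ℤ)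
    (u : ι → ℤ) (v : κ → ℤ) (c : Fin 2) (X : (ι × κ) × Fin 2 → ℤ) :
    Tvec u v c ⬝ᵥ ((Cmat k Bf Bg e) *ᵥ X) =
      ∑ a ∈ Finset.range k, ∑ b ∈ Finset.range k, ∑ c' : Fin 2,
        if a + b + (c : ℕ) = e + k * (c' : ℕ)
        then Tvec (u ᵥ* Bf a) (v ᵥ* Bg b) c' ⬝ᵥ X else 0 := by
  rw [tvec_dot]
  simp only [tvec_dot, Tvec, Matrix.mulVec, dotProduct, Cmat, Matrix.of_apply,
    Matrix.vecMul, Fintype.sum_prod_type, Finset.sum_mul, Finset.mul_sum,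
    mul_ite, ite_mul, mul_zero, zero_mul, Finset.sum_ite_eq, Finset.sum_ite_eq',
    Finset.mem_univ, if_true]
  simp only [ite_sum_push]
  conv_lhs => rw [← Finset.sum_product', ← Finset.sum_product', ← Finset.sum_product',
    ← Finset.sum_product', ← Finset.sum_product', ← Finset.sum_product']
  conv_rhs => rw [← Finset.sum_product', ← Finset.sum_product', ← Finset.sum_product',
    ← Finset.sum_product', ← Finset.sum_product', ← Finset.sum_product']
  refine Finset.sum_nbij'
    (fun x => ((((((x.1.2, x.2), x.1.1.2), x.1.1.1.1.2), x.1.1.1.2), x.1.1.1.1.1.2),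
      x.1.1.1.1.1.1))
    (fun y => ((((((y.2, y.1.2), y.1.1.1.2), y.1.1.2), y.1.1.1.1.2), y.1.1.1.1.1.1),
      y.1.1.1.1.1.2)) ?_ ?_ ?_ ?_ ?_
  · intro x hx
    simp only [Finset.mem_product, Finset.mem_univ, and_true, true_and] at hx ⊢
    tauto
  · intro y hy
    simp only [Finset.mem_product, Finset.mem_univ, and_true, true_and] at hy ⊢
    tauto
  · intro x _; rfl
  · intro y _; rfl
  · intro x _
    dsimp only
    split_ifs <;> ring

lemma carry_arith (k e s M M' : ℕ) (hk : 2 ≤ k) (he : e < k) (hs : s < 2*k)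
    (h : s + k*M = e + k*M') : (s = e ∧ M' = M) ∨ (s = e + k ∧ M' = M + 1) := by
  have h' : (s:ℤ) + k*M = e + k*M' := by exact_mod_cast h
  have hD : ((M':ℤ) - M = 0) ∨ ((M':ℤ) - M = 1) := by
    by_contra hcon
    push_neg at hcon
    obtain ⟨h0, h1⟩ := hcon
    have hk' : (2:ℤ) ≤ k := by exact_mod_cast hk
    have he' : (e:ℤ) < k := by exact_mod_cast he
    have hs' : (s:ℤ) < 2*k := by exact_mod_cast hs
    have : (M':ℤ) - M ≤ -1 ∨ (M':ℤ) - M ≥ 2 := by omega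
    rcases this with hle | hge
    · nlinarith [Int.natCast_nonneg s, Int.natCast_nonneg e]
    · nlinarith [Int.natCast_nonneg s, Int.natCast_nonneg e]
  rcases hD with h0 | h1
  · left
    have hMM : M' = M := by omega
    subst hMM
    exact ⟨Nat.add_right_cancel h, rfl⟩
  · right
    have hMM : M' = M + 1 := by omega
    subst hMM
    refine ⟨?_, rfl⟩
    rw [Nat.mul_succ, show e + (k*M + k) = (e + k) + k*M by ring] at h
    exact Nat.add_right_cancel h

lemma conv_main (k : ℕ) (hk : 2 ≤ k) (Bf : ℕ → Matrix ι ι ℤ) (Bg : ℕ → Matrix κ κ ℤ)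
    (Vf : ι → ℤ) (Vg : κ → ℤ) :
    ∀ (l : List ℕ), (∀ x ∈ l, x < k) → ∀ (u : ι → ℤ) (v : κ → ℤ) (c : Fin 2),
      Tvec u v c ⬝ᵥ (((l.map (Cmat k Bf Bg)).prod).mulVec (Tvec Vf Vg 0)) =
        ∑ p ∈ (Finset.range (Nat.ofDigits k l + 1) ×ˢ
            Finset.range (Nat.ofDigits k l + 1)).filter
            (fun p => p.1 + p.2 + (c : ℕ) = Nat.ofDigits k l),
          Fval k Bf Vf u l.length p.1 * Fval k Bg Vg v l.length p.2 := by
  intro l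
  induction l with
  | nil =>
    intro _ u v c
    simp only [List.map_nil, List.prod_nil, Matrix.one_mulVec, Nat.ofDigits_nil,
      List.length_nil]
    rw [tvec_dot]
    rcases fin2_cases c with rfl | rfl
    · have hset : ((Finset.range 1 ×ˢ Finset.range 1).filter
          (fun p : ℕ × ℕ => p.1 + p.2 + ((0 : Fin 2) : ℕ) = 0)) = {(0,0)} := by decide
      erw [hset, Finset.sum_singleton]
      simp [Tvec, Fval, padRep_zero_zero, dotProduct, Finset.sum_mul_sum]
      rw [Fintype.sum_prod_type]
      congr 1; funext p; congr 1; funext q; ring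
    · have hset : ((Finset.range 1 ×ˢ Finset.range 1).filter
          (fun p : ℕ × ℕ => p.1 + p.2 + ((1 : Fin 2) : ℕ) = 0)) = ∅ := by decide
      erw [hset, Finset.sum_empty]
      simp [Tvec]
  | cons e t ih =>
    intro hlt u v c
    have he : e < k := hlt e (by simp)
    have ht : ∀ x ∈ t, x < k := fun x hx => hlt x (by simp [hx])
    rw [List.map_cons, List.prod_cons, ← Matrix.mulVec_mulVec, step_expand]
    simp only [ih ht]
    simp only [List.length_cons, Fval_succ k hk, Nat.ofDigits_cons]
    conv_lhs => rw [← Finset.sum_product', ← Finset.sum_product']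
    rw [← Finset.sum_filter, Finset.sum_sigma']
    refine Finset.sum_nbij'
      (fun x => (x.1.1.1 + k * x.2.1, x.1.1.2 + k * x.2.2))
      (fun p => ⟨((p.1 % k, p.2 % k),
          if p.1 % k + p.2 % k + (c : ℕ) = e then 0 else 1), (p.1 / k, p.2 / k)⟩)
      ?_ ?_ ?_ ?_ ?_
    · -- forward membership
      rintro ⟨⟨⟨a, b⟩, c'⟩, j', i'⟩ hx
      simp only [Finset.mem_sigma, Finset.mem_filter, Finset.mem_product,
        Finset.mem_range, Finset.mem_univ, and_true, true_and] at hx ⊢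
      obtain ⟨⟨⟨haAk, hbk⟩, hcond⟩, ⟨hj', hi'⟩, hsum⟩ := hx
      have hmul : k * j' + k * i' + k * (c' : ℕ) = k * Nat.ofDigits k t := by
        rw [← hsum]; ring
      have key : (a + k * j') + (b + k * i') + (c : ℕ)
          = e + k * Nat.ofDigits k t := by
        calc (a + k * j') + (b + k * i') + (c : ℕ)
            = (a + b + (c : ℕ)) + (k * j' + k * i') := by ring
          _ = (e + k * (c' : ℕ)) + (k * j' + k * i') := by rw [hcond]
          _ = e + (k * j' + k * i' + k * (c' : ℕ)) := by ring
          _ = e + k * Nat.ofDigits k t := by rw [hmul]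
      have h1 : a + k * j' ≤ e + k * Nat.ofDigits k t := by
        rw [← key]; exact le_self_add.trans le_self_add
      have h2 : b + k * i' ≤ e + k * Nat.ofDigits k t := by
        rw [← key]; exact le_add_self.trans le_self_add
      exact Finset.mem_filter.mpr ⟨Finset.mem_product.mpr ⟨Finset.mem_range.mpr (Nat.lt_succ_of_le h1),
        Finset.mem_range.mpr (Nat.lt_succ_of_le h2)⟩, key⟩
    · -- backward membership
      rintro ⟨j, i⟩ hp
      simp only [Finset.mem_sigma, Finset.mem_filter, Finset.mem_product,
        Finset.mem_range, Finset.mem_univ, and_true, true_and] at hp ⊢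
      obtain ⟨hjiN, hsum⟩ := Finset.mem_filter.mp hp
      obtain ⟨hjN, hiN⟩ := Finset.mem_product.mp hjiN
      simp only [Finset.mem_range] at hjN hiN hsum
      have hkpos : 0 < k := by omega
      have hdj := Nat.div_add_mod j k
      have hdi := Nat.div_add_mod i k
      have hjk := Nat.mod_lt j hkpos
      have hik := Nat.mod_lt i hkpos
      have hc2 : (c : ℕ) < 2 := c.isLt
      have harith : (j % k + i % k + (c : ℕ)) + k * (j / k + i / k)
          = e + k * Nat.ofDigits k t := by
        rw [Nat.mul_add]; linarith
      have hs2 : j % k + i % k + (c : ℕ) < 2 * k := by omega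
      rcases carry_arith k e _ _ _ hk he hs2 harith with ⟨hse, hMM⟩ | ⟨hse, hMM⟩
      · rw [if_pos hse]
        refine ⟨⟨⟨hjk, hik⟩, by simp [hse]⟩, ⟨?_, ?_⟩, by simp [← hMM]⟩
        · rw [hMM]
          exact Nat.lt_succ_of_le (Nat.le_add_right _ _)
        · rw [hMM]
          exact Nat.lt_succ_of_le (Nat.le_add_left _ _)
      · have hne : j % k + i % k + (c : ℕ) ≠ e := by omega
        rw [if_neg hne]
        refine ⟨⟨⟨hjk, hik⟩, by simp [hse]⟩, ⟨?_, ?_⟩, by simp [hMM]⟩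
        · rw [hMM]
          exact Nat.lt_succ_of_le ((Nat.le_add_right _ _).trans (Nat.le_succ _))
        · rw [hMM]
          exact Nat.lt_succ_of_le ((Nat.le_add_left _ _).trans (Nat.le_succ _))
    · -- left inverse
      rintro ⟨⟨⟨a, b⟩, c'⟩, j', i'⟩ hx
      simp only [Finset.mem_sigma, Finset.mem_filter, Finset.mem_product,
        Finset.mem_range, Finset.mem_univ, and_true, true_and] at hx
      obtain ⟨⟨⟨hak, hbk⟩, hcond⟩, ⟨hj', hi'⟩, hsum⟩ := hx
      have hkpos : 0 < k := by omega
      have h1 : (a + k * j') % k = a := by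
        rw [Nat.add_mul_mod_self_left, Nat.mod_eq_of_lt hak]
      have h2 : (b + k * i') % k = b := by
        rw [Nat.add_mul_mod_self_left, Nat.mod_eq_of_lt hbk]
      have h3 : (a + k * j') / k = j' := by
        rw [Nat.add_mul_div_left _ _ hkpos, Nat.div_eq_of_lt hak, Nat.zero_add]
      have h4 : (b + k * i') / k = i' := by
        rw [Nat.add_mul_div_left _ _ hkpos, Nat.div_eq_of_lt hbk, Nat.zero_add]
      have hc'' : (if a + b + (c : ℕ) = e then (0 : Fin 2) else 1) = c' := by
        rcases fin2_cases c' with rfl | rfl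
        · simp only [Fin.val_zero, Nat.mul_zero, Nat.add_zero] at hcond
          rw [if_pos hcond]
        · have : a + b + (c : ℕ) ≠ e := by
            simp only [Fin.val_one, Nat.mul_one] at hcond; omega
          rw [if_neg this]
      simp only [h1, h2, h3, h4, hc'']
    · -- right inverse
      rintro ⟨j, i⟩ hp
      simp only [Nat.mod_add_div]
    · -- values
      rintro ⟨⟨⟨a, b⟩, c'⟩, j', i'⟩ hx
      simp only [Finset.mem_sigma, Finset.mem_filter, Finset.mem_product,
        Finset.mem_range, Finset.mem_univ, and_true, true_and] at hx
      obtain ⟨⟨⟨hak, hbk⟩, hcond⟩, ⟨hj', hi'⟩, hsum⟩ := hx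
      have hkpos : 0 < k := by omega
      have h1 : (a + k * j') % k = a := by
        rw [Nat.add_mul_mod_self_left, Nat.mod_eq_of_lt hak]
      have h2 : (b + k * i') % k = b := by
        rw [Nat.add_mul_mod_self_left, Nat.mod_eq_of_lt hbk]
      have h3 : (a + k * j') / k = j' := by
        rw [Nat.add_mul_div_left _ _ hkpos, Nat.div_eq_of_lt hak, Nat.zero_add]
      have h4 : (b + k * i') / k = i' := by
        rw [Nat.add_mul_div_left _ _ hkpos, Nat.div_eq_of_lt hbk, Nat.zero_add]
      simp only [h1, h2, h3, h4]

lemma Fval_eq_of_rep (k : ℕ) (hk : 2 ≤ k) (f : ℕ → ℤ) (Bf : ℕ → Matrix ι ι ℤ)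
    (Vf Wf : ι → ℤ)
    (hrep : ∀ l : List ℕ, (∀ x ∈ l, x < k) →
      Wf ⬝ᵥ ((l.map Bf).prod.mulVec Vf) = f (Nat.ofDigits k l)) (L m : ℕ) :
    Fval k Bf Vf Wf L m = f m := by
  rw [Fval, hrep _ (padRep_lt k hk L m), ofDigits_padRep k hk]

end Conv

lemma isKRegular_conv (k : ℕ) (hk : 2 ≤ k) (f g : ℕ → ℤ)
    (hf : IsKRegular k f) (hg : IsKRegular k g) :
    IsKRegular k (fun n => ∑ j ∈ Finset.range (n + 1), f j * g (n - j)) := by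
  classical
  obtain ⟨ι, _, _, hι, Bf, Vf, Wf, hFrep⟩ := exists_padded k hk f hf
  obtain ⟨κ, _, _, hκ, Bg, Vg, Wg, hGrep⟩ := exists_padded k hk g hg
  haveI := hι; haveI := hκ
  apply isKRegular_of_rep (Cmat k Bf Bg) (Tvec Vf Vg 0) (Tvec Wf Wg 0)
  intro n
  have hdig : ∀ x ∈ Nat.digits k n, x < k := fun x hx =>
    Nat.digits_lt_base (by omega) hx
  rw [conv_main k hk Bf Bg Vf Vg (Nat.digits k n) hdig Wf Wg 0]
  simp only [Nat.ofDigits_digits, Fin.val_zero, Nat.add_zero,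
    Fval_eq_of_rep k hk f Bf Vf Wf hFrep, Fval_eq_of_rep k hk g Bg Vg Wg hGrep]
  refine Finset.sum_nbij' (fun j => (j, n - j)) (fun p => p.1) ?_ ?_ ?_ ?_ ?_
  · intro j hj
    simp only [Finset.mem_range, Finset.mem_filter, Finset.mem_product] at hj ⊢
    omega
  · intro p hp
    simp only [Finset.mem_range, Finset.mem_filter, Finset.mem_product] at hp ⊢
    omega
  · intro j _; rfl
  · intro p hp
    simp only [Finset.mem_filter, Finset.mem_product, Finset.mem_range] at hp
    rcases p with ⟨j, i⟩
    have : n - j = i := by omega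
    simp [this]
  · intro j hj
    rfl

lemma isKRegular_one (k : ℕ) : IsKRegular k (fun _ => (1 : ℤ)) := by
  refine ⟨1, le_refl 1, fun _ => 1, fun _ => 1, fun _ => 1, fun n => ?_⟩
  have : ((Nat.digits k n).map (fun _ => (1 : Matrix (Fin 1) (Fin 1) ℤ))).prod = 1 := by
    rw [List.prod_eq_one]
    intro x hx
    rcases List.mem_map.mp hx with ⟨y, _, rfl⟩
    rfl
  rw [this, Matrix.one_mulVec]
  simp [dotProduct]

/-- the Cauchy convolution of two `k`-regular sequences is `k`-regular;
in particular the partial-sum sequence of a `k`-regular sequence is `k`-regular. -/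
theorem stmt_18 (k : ℕ) (hk : 2 ≤ k) (f g : ℕ → ℤ)
    (hf : IsKRegular k f) (hg : IsKRegular k g) :
    IsKRegular k (fun n => ∑ j ∈ Finset.range (n + 1), f j * g (n - j)) ∧
    IsKRegular k (fun n => ∑ j ∈ Finset.range (n + 1), f j) := by
  constructor
  · exact isKRegular_conv k hk f g hf hg
  · have h1 := isKRegular_conv k hk f (fun _ => 1) hf (isKRegular_one k)
    simpa using h1
end
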